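/- Let S ∈ ℝ^{d×d} be an irreducible row-stochastic matrix (nonnegative entries, each row summing to 1, and for every pair (i,j) there exists k ≥ 1 with (S^k)_{ij} > 0), and let π ∈ ℝ^d be its unique invariant probability vector (Sᵀπ = π, π has nonnegative entries summing to 1). Then every complex eigenvalue λ of the matrix A = (I − Sᵀ) + π𝟙ᵀ (where 𝟙 is the all-ones vector) satisfies Re(λ) > 0; consequently, the Lyapunov equation ΠA + AᵀΠ = I admits a symmetric positive definite solution Π ∈ ℝ^{d×d}. -/

import Mathlib

open Matrix

section LyapunovAux

open Finset Filter
open scoped ENNReal NNReal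

attribute [local instance] Matrix.linftyOpNormedAddCommGroup Matrix.linftyOpNormedRing
  Matrix.linftyOpNormedSpace Matrix.linftyOpNormedAlgebra

variable {d : ℕ}

variable {d : ℕ}

lemma pow_nonneg_entries {S : Matrix (Fin d) (Fin d) ℝ} (hS0 : ∀ i j, 0 ≤ S i j) :
    ∀ k i j, 0 ≤ (S ^ k) i j := by
  intro k
  induction k with
  | zero => intro i j; simp [Matrix.one_apply]; positivity
  | succ n ih =>
      intro i j
      rw [pow_succ, Matrix.mul_apply]
      exact Finset.sum_nonneg fun l _ => mul_nonneg (ih i l) (hS0 l j)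

lemma fixed_nonneg_pos {S : Matrix (Fin d) (Fin d) ℝ}
    (hS0 : ∀ i j, 0 ≤ S i j)
    (hirr : ∀ i j : Fin d, ∃ k : ℕ, 1 ≤ k ∧ 0 < (S ^ k) i j)
    {u : Fin d → ℝ} (hu0 : ∀ i, 0 ≤ u i) (hufix : Sᵀ *ᵥ u = u)
    {i0 : Fin d} (hpos : 0 < u i0) : ∀ j, 0 < u j := by
  have hk : ∀ k : ℕ, (S ^ k)ᵀ *ᵥ u = u := by
    intro k
    induction k with
    | zero => simp
    | succ n ih =>
        rw [pow_succ, Matrix.transpose_mul, ← Matrix.mulVec_mulVec, ih, hufix]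
  intro j
  obtain ⟨k, -, hkpos⟩ := hirr i0 j
  have := hk k
  have hj : u j = ∑ i, (S ^ k) i j * u i := by
    conv_lhs => rw [← this]
    simp [Matrix.mulVec, dotProduct, Matrix.transpose_apply, mul_comm]
  rw [hj]
  have : (S ^ k) i0 j * u i0 ≤ ∑ i, (S ^ k) i j * u i :=
    Finset.single_le_sum (fun i _ => mul_nonneg (pow_nonneg_entries hS0 k i j) (hu0 i))
      (Finset.mem_univ i0)
  exact lt_of_lt_of_le (mul_pos hkpos hpos) this

lemma real_fixed_sum_zero {S : Matrix (Fin d) (Fin d) ℝ}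
    (hS0 : ∀ i j, 0 ≤ S i j) (hSrow : ∀ i, ∑ j, S i j = 1)
    (hirr : ∀ i j : Fin d, ∃ k : ℕ, 1 ≤ k ∧ 0 < (S ^ k) i j)
    {w : Fin d → ℝ} (hfix : Sᵀ *ᵥ w = w) (hsum : ∑ i, w i = 0) : w = 0 := by
  by_contra hw
  obtain ⟨i0, hi0⟩ := Function.ne_iff.mp hw
  set u : Fin d → ℝ := fun i => |w i| with hu
  have hwj : ∀ j, ∑ i, S i j * w i = w j := by
    intro j
    have := congrFun hfix j
    simpa [Matrix.mulVec, dotProduct, Matrix.transpose_apply] using this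
  have hle : ∀ j, |w j| ≤ ∑ i, S i j * |w i| := by
    intro j
    calc |w j| = |∑ i, S i j * w i| := by rw [hwj j]
    _ ≤ ∑ i, |S i j * w i| := Finset.abs_sum_le_sum_abs _ _
    _ = ∑ i, S i j * |w i| := by
        refine Finset.sum_congr rfl fun i _ => ?_
        rw [abs_mul, abs_of_nonneg (hS0 i j)]
  have htot : ∑ j, ∑ i, S i j * |w i| = ∑ i, |w i| := by
    rw [Finset.sum_comm]
    refine Finset.sum_congr rfl fun i _ => ?_
    rw [← Finset.sum_mul, hSrow i, one_mul]
  have hgap : ∀ j, ∑ i, S i j * |w i| = |w j| := by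
    have hsum0 : ∑ j, (∑ i, S i j * |w i|) - ∑ j, |w j| = 0 := by rw [htot]; ring
    have key : ∀ j ∈ Finset.univ, (∑ i, S i j * |w i|) - |w j| = 0 := by
      refine (Finset.sum_eq_zero_iff_of_nonneg fun j _ => sub_nonneg.mpr (hle j)).mp ?_
      rw [Finset.sum_sub_distrib]
      exact hsum0
    intro j
    have := key j (Finset.mem_univ j)
    linarith
  have hufix : Sᵀ *ᵥ u = u := by
    funext j
    simp only [Matrix.mulVec, dotProduct, Matrix.transpose_apply, hu]
    exact hgap j
  -- p := u + w and q := u - w are nonneg fixed vectors with positive sum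
  have hupos : 0 < u i0 := abs_pos.mpr (by simpa using hi0)
  have hp0 : ∀ i, 0 ≤ u i + w i := fun i => by
    have := neg_abs_le (w i); simp only [hu]; linarith
  have hq0 : ∀ i, 0 ≤ u i - w i := fun i => by
    have := le_abs_self (w i); simp only [hu]; linarith
  have hpfix : Sᵀ *ᵥ (u + w) = u + w := by rw [Matrix.mulVec_add, hufix, hfix]
  have hqfix : Sᵀ *ᵥ (u - w) = u - w := by rw [Matrix.mulVec_sub, hufix, hfix]
  have hsumu : 0 < ∑ i, u i :=
    Finset.sum_pos' (fun i _ => abs_nonneg _) ⟨i0, Finset.mem_univ i0, hupos⟩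
  have hsump : ∑ _i : Fin d, (0 : ℝ) < ∑ i, (u i + w i) := by
    rw [Finset.sum_add_distrib, hsum]; simpa using hsumu
  have hsumq : ∑ _i : Fin d, (0 : ℝ) < ∑ i, (u i - w i) := by
    rw [Finset.sum_sub_distrib, hsum]; simpa using hsumu
  obtain ⟨i1, -, hi1⟩ := Finset.exists_lt_of_sum_lt hsump
  obtain ⟨i2, -, hi2⟩ := Finset.exists_lt_of_sum_lt hsumq
  have hP := fixed_nonneg_pos hS0 hirr (fun i => hp0 i) hpfix (show 0 < (u + w) i1 from hi1) i0
  have hQ := fixed_nonneg_pos hS0 hirr (fun i => hq0 i) hqfix (show 0 < (u - w) i2 from hi2) i0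
  simp only [Pi.add_apply, Pi.sub_apply, hu] at hP hQ
  rcases le_or_gt (w i0) 0 with h | h
  · rw [abs_of_nonpos h] at hP; linarith
  · rw [abs_of_pos h] at hQ; linarith


lemma spec_pos (d : ℕ) (hd : 1 ≤ d)
    (S : Matrix (Fin d) (Fin d) ℝ)
    (hS0 : ∀ i j, 0 ≤ S i j) (hSrow : ∀ i, ∑ j, S i j = 1)
    (hirr : ∀ i j : Fin d, ∃ k : ℕ, 1 ≤ k ∧ 0 < (S ^ k) i j)
    (π : Fin d → ℝ) (hπ0 : ∀ i, 0 ≤ π i) (hπ1 : ∑ i, π i = 1)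
    (A : Matrix (Fin d) (Fin d) ℝ)
    (hA : A = (1 - Sᵀ) + Matrix.of fun i _ => π i)
    (real_fixed : ∀ w : Fin d → ℝ, Sᵀ *ᵥ w = w → ∑ i, w i = 0 → w = 0)
    (mem_spec : ∀ (N : Matrix (Fin d) (Fin d) ℂ) (μ : ℂ),
      μ ∈ spectrum ℂ N ↔ ∃ v, v ≠ 0 ∧ N *ᵥ v = μ • v) :
    ∀ lam : ℂ, lam ∈ spectrum ℂ (A.map Complex.ofReal) → 0 < lam.re := by
  intro lam hlam
  obtain ⟨v, hv0, hv⟩ := (mem_spec _ lam).mp hlam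
  have hAentry : ∀ i j, A i j = (if i = j then (1:ℝ) else 0) - S j i + π i := by
    intro i j; rw [hA]; simp [Matrix.one_apply, Matrix.sub_apply, Matrix.add_apply]
  have hcomp : ∀ j, ∑ i, (A j i : ℂ) * v i = lam * v j := by
    intro j
    have := congrFun hv j
    simpa [Matrix.mulVec, dotProduct, Matrix.map_apply] using this
  set t : ℂ := ∑ i, v i with ht
  -- column sums of A are 1
  have hAcol : ∀ j, ∑ i, A i j = 1 := by
    intro j
    simp only [hAentry]
    rw [Finset.sum_add_distrib, Finset.sum_sub_distrib]
    have h1 : ∑ i, (if i = j then (1:ℝ) else 0) = 1 := by simp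
    have h2 : ∑ i : Fin d, S j i = 1 := hSrow j
    rw [h1, h2, hπ1]; ring
  have hsumAv : lam * t = t := by
    have : ∑ j, ∑ i, (A j i : ℂ) * v i = ∑ j, lam * v j := Finset.sum_congr rfl fun j _ => hcomp j
    rw [Finset.sum_comm] at this
    have lhs : ∑ i, ∑ j, (A j i : ℂ) * v i = t := by
      rw [ht]
      refine Finset.sum_congr rfl fun i _ => ?_
      rw [← Finset.sum_mul]
      have : ∑ j, (A j i : ℂ) = ((∑ j, A j i : ℝ) : ℂ) := by push_cast; rfl
      rw [this, hAcol i]; simp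
    rw [lhs, ← Finset.mul_sum] at this
    exact this.symm
  by_cases htz : t = 0
  · -- Sᵀ v = (1 - lam) v with ∑ v = 0
    have hSv : ∀ j, ∑ i, (S i j : ℂ) * v i = (1 - lam) * v j := by
      intro j
      have h := hcomp j
      have expand : ∑ i, (A j i : ℂ) * v i
          = v j - ∑ i, (S i j : ℂ) * v i + (π j : ℂ) * t := by
        have : ∀ i, (A j i : ℂ) * v i
            = (if j = i then (1:ℂ) else 0) * v i - (S i j : ℂ) * v i + (π j : ℂ) * v i := by
          intro i
          rw [hAentry j i]
          push_cast
          ring_nf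
          by_cases hji : j = i <;> simp [hji] <;> ring
        rw [Finset.sum_congr rfl fun i _ => this i, Finset.sum_add_distrib,
          Finset.sum_sub_distrib, ← Finset.mul_sum, ← ht]
        congr 1
        congr 1
        simp
      rw [expand, htz, mul_zero, add_zero] at h
      have : (1 - lam) * v j = v j - lam * v j := by ring
      rw [this, ← h]; ring
    set μ : ℂ := 1 - lam with hμ
    by_contra hre
    push_neg at hre
    have hμre : 1 ≤ μ.re := by simp [hμ]; linarith
    -- |μ| ≤ 1
    have hvsum_pos : 0 < ∑ j, ‖v j‖ := by
      have : ∃ j, v j ≠ 0 := Function.ne_iff.mp hv0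
      obtain ⟨j0, hj0⟩ := this
      exact Finset.sum_pos' (fun j _ => norm_nonneg _)
        ⟨j0, Finset.mem_univ j0, norm_pos_iff.mpr hj0⟩
    have habs : ‖μ‖ * (∑ j, ‖v j‖) ≤ ∑ j, ‖v j‖ := by
      have step : ∀ j, ‖μ‖ * ‖v j‖ ≤ ∑ i, S i j * ‖v i‖ := by
        intro j
        rw [← norm_mul, ← hSv j]
        calc ‖∑ i, (S i j : ℂ) * v i‖ ≤ ∑ i, ‖(S i j : ℂ) * v i‖ :=
          norm_sum_le _ _
        _ = ∑ i, S i j * ‖v i‖ := by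
            refine Finset.sum_congr rfl fun i _ => ?_
            rw [norm_mul, Complex.norm_real, Real.norm_of_nonneg (hS0 i j)]
      calc ‖μ‖ * (∑ j, ‖v j‖) = ∑ j, ‖μ‖ * ‖v j‖ := by
            rw [Finset.mul_sum]
      _ ≤ ∑ j, ∑ i, S i j * ‖v i‖ := Finset.sum_le_sum fun j _ => step j
      _ = ∑ i, ‖v i‖ := by
          rw [Finset.sum_comm]
          refine Finset.sum_congr rfl fun i _ => ?_
          rw [← Finset.sum_mul, hSrow i, one_mul]
    have habs1 : ‖μ‖ ≤ 1 := by
      by_contra hgt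
      push_neg at hgt
      nlinarith
    have hμ1 : μ = 1 := by
      have h1 : μ.re ≤ ‖μ‖ := Complex.re_le_norm μ
      have hre1 : μ.re = 1 := le_antisymm (h1.trans habs1) hμre
      have habsq : (‖μ‖)^2 ≤ 1 := by nlinarith
      have hsq : μ.re^2 + μ.im^2 ≤ 1 := by
        have h2 := Complex.sq_norm μ
        rw [Complex.normSq_apply] at h2
        nlinarith [h2]
      have him : μ.im = 0 := by nlinarith
      exact Complex.ext (by simp [hre1]) (by simp [him])
    -- now Sᵀ v = v, contradiction via real parts
    have hSv1 : ∀ j, ∑ i, (S i j : ℂ) * v i = v j := by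
      intro j; rw [hSv j, hμ1, one_mul]
    set a : Fin d → ℝ := fun i => (v i).re with ha
    set b : Fin d → ℝ := fun i => (v i).im with hb
    have hfa : Sᵀ *ᵥ a = a := by
      funext j
      have := congrArg Complex.re (hSv1 j)
      simpa [Matrix.mulVec, dotProduct, Matrix.transpose_apply, Complex.re_sum,
        Complex.mul_re, ha] using this
    have hfb : Sᵀ *ᵥ b = b := by
      funext j
      have := congrArg Complex.im (hSv1 j)
      simpa [Matrix.mulVec, dotProduct, Matrix.transpose_apply, Complex.im_sum,
        Complex.mul_im, hb] using this
    have hsa : ∑ i, a i = 0 := by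
      have h := congrArg Complex.re htz
      rw [ht] at h
      simpa [Complex.re_sum, ha] using h
    have hsb : ∑ i, b i = 0 := by
      have h := congrArg Complex.im htz
      rw [ht] at h
      simpa [Complex.im_sum, hb] using h
    have ha0 := real_fixed a hfa hsa
    have hb0 := real_fixed b hfb hsb
    apply hv0
    funext i
    have h1 : a i = 0 := congrFun ha0 i
    have h2 : b i = 0 := congrFun hb0 i
    exact Complex.ext (by simpa [ha] using h1) (by simpa [hb] using h2)
  · have : lam = 1 := by
      have h1 : lam * t = 1 * t := by rw [hsumAv, one_mul]
      exact mul_right_cancel₀ htz h1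
    rw [this]; norm_num


lemma mem_spectrum_iff_eigen' {d : ℕ} (N : Matrix (Fin d) (Fin d) ℂ) (μ : ℂ) :
    μ ∈ spectrum ℂ N ↔ ∃ v, v ≠ 0 ∧ N *ᵥ v = μ • v := by
  rw [← AlgEquiv.spectrum_eq (Matrix.toLinAlgEquiv' (n := Fin d) (R := ℂ)),
    ← Module.End.hasEigenvalue_iff_mem_spectrum]
  constructor
  · intro h
    obtain ⟨v, hv⟩ := h.exists_hasEigenvector
    exact ⟨v, hv.right, by simpa [Matrix.toLinAlgEquiv'_apply] using hv.apply_eq_smul⟩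
  · rintro ⟨v, hv0, hv⟩
    exact Module.End.hasEigenvalue_of_hasEigenvector ⟨Module.End.mem_eigenspace_iff.mpr
      (by simpa [Matrix.toLinAlgEquiv'_apply] using hv), hv0⟩

lemma lyap_of_stable (d : ℕ) (hd : 1 ≤ d) (A : Matrix (Fin d) (Fin d) ℝ)
    (hspec : ∀ lam : ℂ, lam ∈ spectrum ℂ (A.map Complex.ofReal) → 0 < lam.re) :
    ∃ Pmat : Matrix (Fin d) (Fin d) ℝ, Pmat.IsSymm ∧ Pmat.PosDef ∧
      Pmat * A + Aᵀ * Pmat = 1 := by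
  have i0 : Fin d := ⟨0, hd⟩
  set φ : Matrix (Fin d) (Fin d) ℝ →+* Matrix (Fin d) (Fin d) ℂ :=
    Complex.ofRealHom.mapMatrix with hφ
  have hφapp : ∀ B : Matrix (Fin d) (Fin d) ℝ, φ B = B.map Complex.ofReal := fun B => rfl
  -- 1 + A invertible
  have hdet : IsUnit (1 + A).det := by
    rw [isUnit_iff_ne_zero]
    intro h0
    have hc : (1 + φ A).det = (0 : ℂ) := by
      calc (1 + φ A).det = (φ (1 + A)).det := by rw [map_add φ, _root_.map_one φ]
      _ = Complex.ofRealHom ((1 + A).det) := (RingHom.map_det Complex.ofRealHom _).symm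
      _ = 0 := by rw [h0]; simp
    have hnu : ¬ IsUnit (1 + φ A) := by
      rw [Matrix.isUnit_iff_isUnit_det, hc]
      exact not_isUnit_zero
    have hmem : (-1 : ℂ) ∈ spectrum ℂ (A.map Complex.ofReal) := by
      rw [spectrum.mem_iff]
      intro hu
      apply hnu
      have heq : (algebraMap ℂ (Matrix (Fin d) (Fin d) ℂ)) (-1) - A.map Complex.ofReal
          = -(1 + φ A) := by
        rw [hφapp]; simp [Algebra.algebraMap_eq_smul_one]; abel
      rw [heq] at hu
      simpa using hu.neg
    have := hspec (-1) hmem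
    norm_num at this
  set M : Matrix (Fin d) (Fin d) ℝ := 1 + A with hM
  have hMM : M⁻¹ * M = 1 := Matrix.nonsing_inv_mul M hdet
  have hMM' : M * M⁻¹ = 1 := Matrix.mul_nonsing_inv M hdet
  set C : Matrix (Fin d) (Fin d) ℝ := (1 - A) * M⁻¹ with hC
  -- eigenvalues of φ C have modulus < 1
  have heig : ∀ μ : ℂ, μ ∈ spectrum ℂ (φ C) → ‖μ‖ < 1 := by
    intro μ hμ
    obtain ⟨v, hv0, hv⟩ := (mem_spectrum_iff_eigen' _ μ).mp hμ
    have hvu : v = φ M *ᵥ (φ M⁻¹ *ᵥ v) := by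
      rw [Matrix.mulVec_mulVec, ← _root_.map_mul φ, hMM', _root_.map_one φ, Matrix.one_mulVec]
    set u : Fin d → ℂ := φ M⁻¹ *ᵥ v with hu
    have hu0 : u ≠ 0 := by
      intro h
      apply hv0
      rw [hvu, h, Matrix.mulVec_zero]
    have h1 : φ C *ᵥ v = φ (1 - A) *ᵥ u := by
      rw [hC, _root_.map_mul φ, ← Matrix.mulVec_mulVec, ← hu]
    have h2 : φ (1 - A) *ᵥ u = u - φ A *ᵥ u := by
      rw [map_sub φ, _root_.map_one φ, Matrix.sub_mulVec, Matrix.one_mulVec]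
    have h3 : φ M *ᵥ u = u + φ A *ᵥ u := by
      rw [hM, map_add φ, _root_.map_one φ, Matrix.add_mulVec, Matrix.one_mulVec]
    have hkey : u - φ A *ᵥ u = μ • u + μ • (φ A *ᵥ u) := by
      calc u - φ A *ᵥ u = φ C *ᵥ v := (h1.trans h2).symm
      _ = μ • v := hv
      _ = μ • (φ M *ᵥ u) := by rw [← hvu]
      _ = μ • (u + φ A *ᵥ u) := by rw [h3]
      _ = μ • u + μ • (φ A *ᵥ u) := smul_add _ _ _
    have hkey2 : (1 - μ) • u = (1 + μ) • (φ A *ᵥ u) := by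
      rw [sub_smul, add_smul, one_smul, one_smul]
      have hab : u - μ • u - (φ A *ᵥ u + μ • (φ A *ᵥ u))
          = (u - φ A *ᵥ u) - (μ • u + μ • (φ A *ᵥ u)) := by abel
      have h0 : u - μ • u - (φ A *ᵥ u + μ • (φ A *ᵥ u)) = 0 := by
        rw [hab, hkey, sub_self]
      exact sub_eq_zero.mp h0
    have hμne : (1 : ℂ) + μ ≠ 0 := by
      intro h
      have h2' : (1 : ℂ) - μ = 2 := by linear_combination -h
      rw [h2', h, zero_smul] at hkey2
      rcases smul_eq_zero.mp hkey2 with h' | h'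
      · norm_num at h'
      · exact hu0 h'
    set lam : ℂ := (1 - μ) / (1 + μ) with hlam
    have heiglam : φ A *ᵥ u = lam • u := by
      have h4 : (1 + μ)⁻¹ • ((1 - μ) • u) = (1 + μ)⁻¹ • ((1 + μ) • (φ A *ᵥ u)) := by
        rw [hkey2]
      rw [smul_smul, smul_smul, inv_mul_cancel₀ hμne, one_smul] at h4
      have h5 : lam = (1 + μ)⁻¹ * (1 - μ) := by rw [hlam, div_eq_mul_inv, mul_comm]
      rw [← h4, h5]
    have hlamspec : lam ∈ spectrum ℂ (A.map Complex.ofReal) := by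
      rw [mem_spectrum_iff_eigen']
      exact ⟨u, hu0, by rw [← hφapp]; exact heiglam⟩
    have hre := hspec lam hlamspec
    have hlamne : (1 : ℂ) + lam ≠ 0 := by
      intro h
      have h' : lam.re = -1 := by
        have := congrArg Complex.re h
        simp at this
        linarith
      linarith
    have hμval : μ * (1 + lam) = 1 - lam := by
      rw [hlam]
      field_simp
      ring
    have habs : ‖μ‖ * ‖1 + lam‖ = ‖1 - lam‖ := by
      rw [← norm_mul, hμval]
    have hlt : ‖1 - lam‖ < ‖1 + lam‖ := by
      have h1 : ‖1 - lam‖ ^ 2 < ‖1 + lam‖ ^ 2 := by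
        rw [Complex.sq_norm, Complex.sq_norm, Complex.normSq_apply, Complex.normSq_apply]
        simp only [Complex.sub_re, Complex.sub_im, Complex.add_re, Complex.add_im,
          Complex.one_re, Complex.one_im]
        nlinarith
      nlinarith [norm_nonneg (1 - lam),
        norm_nonneg (1 + lam)]
    have hpos : 0 < ‖1 + lam‖ := by
      rw [norm_pos_iff]
      exact hlamne
    calc ‖μ‖ = ‖1 - lam‖ / ‖1 + lam‖ := by
          field_simp [← habs]
          exact habs
    _ < 1 := by rw [div_lt_one hpos]; exact hlt
  -- spectral radius of φ C is < 1
  haveI : Nonempty (Fin d) := ⟨i0⟩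
  haveI : Nontrivial (Matrix (Fin d) (Fin d) ℂ) :=
    ⟨1, 0, fun h => by simpa [Matrix.one_apply] using congrFun (congrFun h i0) i0⟩
  obtain ⟨μ0, hμ0, hmax⟩ := (spectrum.isCompact (𝕜 := ℂ) (φ C)).exists_isMaxOn
    (spectrum.nonempty (φ C)) continuous_norm.continuousOn
  have hρ : spectralRadius ℂ (φ C) < 1 := by
    have hb : spectralRadius ℂ (φ C) ≤ (‖μ0‖₊ : ℝ≥0∞) := by
      rw [spectralRadius]
      exact iSup₂_le fun k hk => ENNReal.coe_le_coe.mpr (by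
        have := hmax hk
        exact_mod_cast this)
    refine lt_of_le_of_lt hb ?_
    have : ‖μ0‖ < 1 := by exact heig μ0 hμ0
    exact_mod_cast this
  obtain ⟨r, hρr, hr1⟩ := ENNReal.lt_iff_exists_nnreal_btwn.mp hρ
  have hr1' : (r : ℝ≥0∞) < 1 := hr1
  have hrR : (r : ℝ) < 1 := by exact_mod_cast hr1'
  have hrR0 : (0 : ℝ) ≤ r := r.coe_nonneg
  have hev : ∀ᶠ n : ℕ in atTop, (‖(φ C) ^ n‖₊ : ℝ≥0∞) ^ (1 / (n : ℝ)) < (r : ℝ≥0∞) :=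
    (spectrum.pow_nnnorm_pow_one_div_tendsto_nhds_spectralRadius (φ C)).eventually_lt_const hρr
  obtain ⟨N, hN⟩ := eventually_atTop.mp hev
  have hCn : ∀ n, N ≤ n → 1 ≤ n → (‖C ^ n‖ : ℝ) ≤ (r : ℝ) ^ n := by
    intro n h1 h2
    have hn0 : (n : ℝ) ≠ 0 := by positivity
    have hx := hN n h1
    have hinv : ((‖(φ C) ^ n‖₊ : ℝ≥0∞) ^ (1 / (n : ℝ))) ^ (n : ℝ)
        = (‖(φ C) ^ n‖₊ : ℝ≥0∞) := by
      rw [← ENNReal.rpow_mul, one_div, inv_mul_cancel₀ hn0, ENNReal.rpow_one]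
    have hle : (‖(φ C) ^ n‖₊ : ℝ≥0∞) ≤ (r : ℝ≥0∞) ^ (n : ℝ) := by
      rw [← hinv]
      exact ENNReal.rpow_le_rpow hx.le (by positivity)
    rw [ENNReal.rpow_natCast, ← ENNReal.coe_pow] at hle
    have hle2 : ‖(φ C) ^ n‖₊ ≤ r ^ n := ENNReal.coe_le_coe.mp hle
    have hmapn : ‖(φ C) ^ n‖₊ = ‖C ^ n‖₊ := by
      rw [← map_pow φ, hφapp]
      simp only [Matrix.linfty_opNNNorm_def, Matrix.map_apply, Complex.nnnorm_real]
    rw [hmapn] at hle2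
    calc (‖C ^ n‖ : ℝ) = ((‖C ^ n‖₊ : ℝ≥0) : ℝ) := rfl
    _ ≤ ((r ^ n : ℝ≥0) : ℝ) := by exact_mod_cast hle2
    _ = (r : ℝ) ^ n := by push_cast; ring
  -- transpose norm bound
  have htrans : ∀ B : Matrix (Fin d) (Fin d) ℝ, ‖Bᵀ‖ ≤ (d : ℝ) * ‖B‖ := by
    intro B
    have hentry : ∀ i j, ‖B i j‖₊ ≤ ‖B‖₊ := by
      intro i j
      rw [Matrix.linfty_opNNNorm_def]
      have ha : ‖B i j‖₊ ≤ ∑ j, ‖B i j‖₊ :=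
        Finset.single_le_sum (f := fun k => ‖B i k‖₊) (fun k _ => by positivity) (Finset.mem_univ j)
      have hb : (∑ j, ‖B i j‖₊) ≤ Finset.univ.sup fun i => ∑ j, ‖B i j‖₊ :=
        Finset.le_sup (f := fun i => ∑ j, ‖B i j‖₊) (Finset.mem_univ i)
      exact ha.trans hb
    have h1 : ‖Bᵀ‖₊ ≤ (d : ℝ≥0) * ‖B‖₊ := by
      rw [Matrix.linfty_opNNNorm_def]
      refine Finset.sup_le fun j _ => ?_
      calc ∑ i, ‖Bᵀ j i‖₊ ≤ ∑ _i : Fin d, ‖B‖₊ :=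
        Finset.sum_le_sum fun i _ => hentry i j
      _ = (d : ℝ≥0) * ‖B‖₊ := by
          rw [Finset.sum_const, Finset.card_univ, Fintype.card_fin, nsmul_eq_mul]
    calc ‖Bᵀ‖ = ((‖Bᵀ‖₊ : ℝ≥0) : ℝ) := rfl
    _ ≤ (((d : ℝ≥0) * ‖B‖₊ : ℝ≥0) : ℝ) := by exact_mod_cast h1
    _ = (d : ℝ) * ‖B‖ := by push_cast; rfl
  -- the series
  set Q : Matrix (Fin d) (Fin d) ℝ := (2 : ℝ) • ((M⁻¹)ᵀ * M⁻¹) with hQ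
  set f : ℕ → Matrix (Fin d) (Fin d) ℝ := fun n => (Cᵀ) ^ n * Q * C ^ n with hf
  have hsum : Summable f := by
    apply Summable.of_norm_bounded_eventually_nat
      (g := fun n => ((d : ℝ) * ‖Q‖) * ((r : ℝ) * (r : ℝ)) ^ n)
    · apply Summable.mul_left
      apply summable_geometric_of_lt_one (by positivity)
      nlinarith
    · filter_upwards [eventually_ge_atTop N, eventually_ge_atTop 1] with n h1 h2
      have hb1 : ‖C ^ n‖ ≤ (r : ℝ) ^ n := hCn n h1 h2
      have hb2 : ‖(Cᵀ) ^ n‖ ≤ (d : ℝ) * ‖C ^ n‖ := by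
        rw [← Matrix.transpose_pow]
        exact htrans _
      have hnn : (0:ℝ) ≤ ‖C ^ n‖ := norm_nonneg _
      calc ‖f n‖ ≤ ‖(Cᵀ) ^ n * Q‖ * ‖C ^ n‖ := Matrix.linfty_opNorm_mul _ _
      _ ≤ (‖(Cᵀ) ^ n‖ * ‖Q‖) * ‖C ^ n‖ :=
          mul_le_mul_of_nonneg_right (Matrix.linfty_opNorm_mul _ _) hnn
      _ ≤ (((d : ℝ) * ‖C ^ n‖) * ‖Q‖) * ‖C ^ n‖ := by
          have h0 : (0:ℝ) ≤ ‖Q‖ := norm_nonneg _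
          apply mul_le_mul_of_nonneg_right _ hnn
          exact mul_le_mul_of_nonneg_right hb2 h0
      _ = ((d : ℝ) * ‖Q‖) * (‖C ^ n‖ * ‖C ^ n‖) := by ring
      _ ≤ ((d : ℝ) * ‖Q‖) * ((r:ℝ)^n * (r:ℝ)^n) := by
          apply mul_le_mul_of_nonneg_left _ (by positivity)
          exact mul_le_mul hb1 hb1 hnn (by positivity)
      _ = ((d : ℝ) * ‖Q‖) * ((r : ℝ) * (r : ℝ)) ^ n := by rw [mul_pow]
  set P : Matrix (Fin d) (Fin d) ℝ := ∑' n, f n with hP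
  -- recurrence
  have hfrec : ∀ n, f (n + 1) = Cᵀ * (f n * C) := by
    intro n
    show Cᵀ ^ (n+1) * Q * C ^ (n+1) = Cᵀ * ((Cᵀ ^ n * Q * C ^ n) * C)
    rw [pow_succ' Cᵀ n, pow_succ C n]
    simp only [mul_assoc]
  have hkeyP : P = Q + Cᵀ * (P * C) := by
    have h1 : P = f 0 + ∑' n, f (n + 1) := Summable.tsum_eq_zero_add hsum
    have h2 : f 0 = Q := by simp [hf]
    have h3 : ∑' n, f (n + 1) = Cᵀ * (P * C) := by
      calc ∑' n, f (n + 1) = ∑' n, Cᵀ * (f n * C) := by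
            refine tsum_congr fun n => hfrec n
      _ = Cᵀ * ∑' n, (f n * C) := (hsum.mul_right C).tsum_mul_left Cᵀ
      _ = Cᵀ * (P * C) := by rw [hsum.tsum_mul_right C]
    calc P = f 0 + ∑' n, f (n + 1) := h1
    _ = Q + Cᵀ * (P * C) := by rw [h2, h3]
  -- symmetry
  have hQsymm : Qᵀ = Q := by
    rw [hQ]
    rw [Matrix.transpose_smul, Matrix.transpose_mul, Matrix.transpose_transpose]
  have hfsymm : ∀ n, (f n)ᵀ = f n := by
    intro n
    simp only [hf, Matrix.transpose_mul, Matrix.transpose_pow, Matrix.transpose_transpose,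
      hQsymm, mul_assoc]
  have hPsymm : Pᵀ = P := by
    let T : Matrix (Fin d) (Fin d) ℝ →L[ℝ] Matrix (Fin d) (Fin d) ℝ :=
      LinearMap.toContinuousLinearMap
        (Matrix.transposeLinearEquiv (Fin d) (Fin d) ℝ ℝ).toLinearMap
    have hT : ∀ B, T B = Bᵀ := fun B => rfl
    calc Pᵀ = T P := (hT P).symm
    _ = ∑' n, T (f n) := T.map_tsum hsum
    _ = ∑' n, f n := by refine tsum_congr fun n => ?_; rw [hT, hfsymm]
    _ = P := rfl
  -- quadratic form facts
  have hMinjv : ∀ y : Fin d → ℝ, M⁻¹ *ᵥ y = 0 → y = 0 := by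
    intro y h
    have h' : M *ᵥ (M⁻¹ *ᵥ y) = y := by
      rw [Matrix.mulVec_mulVec, hMM', Matrix.one_mulVec]
    rw [h, Matrix.mulVec_zero] at h'
    exact h'.symm
  have hQquad : ∀ y : Fin d → ℝ, y ⬝ᵥ (Q *ᵥ y) = 2 * ((M⁻¹ *ᵥ y) ⬝ᵥ (M⁻¹ *ᵥ y)) := by
    intro y
    rw [hQ]
    rw [Matrix.smul_mulVec, dotProduct_smul]
    rw [← Matrix.mulVec_mulVec, Matrix.dotProduct_mulVec, Matrix.vecMul_transpose]
    simp [smul_eq_mul]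
  have hdotpos : ∀ z : Fin d → ℝ, z ≠ 0 → 0 < z ⬝ᵥ z := by
    intro z hz
    have h1 : 0 ≤ z ⬝ᵥ z := Finset.sum_nonneg fun i _ => mul_self_nonneg (z i)
    rcases h1.lt_or_eq with h | h
    · exact h
    · exact absurd (dotProduct_self_eq_zero.mp h.symm) hz
  have hQpos : ∀ y : Fin d → ℝ, y ≠ 0 → 0 < y ⬝ᵥ (Q *ᵥ y) := by
    intro y hy
    rw [hQquad]
    have hz : M⁻¹ *ᵥ y ≠ 0 := fun h => hy (hMinjv y h)
    have := hdotpos _ hz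
    linarith
  have hQnonneg : ∀ y : Fin d → ℝ, 0 ≤ y ⬝ᵥ (Q *ᵥ y) := by
    intro y
    rw [hQquad]
    have h1 : 0 ≤ (M⁻¹ *ᵥ y) ⬝ᵥ (M⁻¹ *ᵥ y) :=
      Finset.sum_nonneg fun i _ => mul_self_nonneg _
    linarith
  have hfquad : ∀ (n : ℕ) (y : Fin d → ℝ),
      y ⬝ᵥ (f n *ᵥ y) = (C ^ n *ᵥ y) ⬝ᵥ (Q *ᵥ (C ^ n *ᵥ y)) := by
    intro n y
    show y ⬝ᵥ ((Cᵀ ^ n * Q * C ^ n) *ᵥ y) = _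
    rw [← Matrix.mulVec_mulVec, ← Matrix.mulVec_mulVec, Matrix.dotProduct_mulVec,
      ← Matrix.transpose_pow, Matrix.vecMul_transpose]
  -- positive definiteness
  have hPposdef : P.PosDef := by
    rw [Matrix.posDef_iff_dotProduct_mulVec]
    constructor
    · show Pᴴ = P
      rw [Matrix.conjTranspose_eq_transpose_of_trivial]
      exact hPsymm
    · intro x hx
      rw [star_trivial]
      let qlin : Matrix (Fin d) (Fin d) ℝ →ₗ[ℝ] ℝ :=
        { toFun := fun X => x ⬝ᵥ (X *ᵥ x)
          map_add' := fun X Y => by simp [Matrix.add_mulVec, dotProduct_add]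
          map_smul' := fun a X => by simp [Matrix.smul_mulVec] }
      let q : Matrix (Fin d) (Fin d) ℝ →L[ℝ] ℝ := LinearMap.toContinuousLinearMap qlin
      have hq : ∀ B, q B = x ⬝ᵥ (B *ᵥ x) := fun B => rfl
      have hsummap : Summable fun n => q (f n) := hsum.mapL q
      have hqP : q P = ∑' n, q (f n) := q.map_tsum hsum
      have hf0 : f 0 = Q := by simp [hf]
      have hpos0 : 0 < q (f 0) := by
        rw [hq, hf0]
        exact hQpos x hx
      have hnonneg : ∀ n, 0 ≤ q (f n) := by
        intro n
        rw [hq, hfquad n x]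
        exact hQnonneg _
      have : 0 < q P := by
        rw [hqP]
        exact Summable.tsum_pos hsummap hnonneg 0 hpos0
      rw [hq] at this
      exact this
  -- the Lyapunov equation
  clear_value M C Q f P
  have hE : P - Cᵀ * (P * C) = Q := by
    nth_rewrite 1 [hkeyP]
    exact add_sub_cancel_right Q _
  have hCM : C * M = 1 - A := by
    rw [hC, mul_assoc, hMM, mul_one]
  have hMQ : Mᵀ * Q * M = (2 : ℝ) • (1 : Matrix (Fin d) (Fin d) ℝ) := by
    rw [hQ, Matrix.mul_smul, Matrix.smul_mul]
    congr 1
    calc Mᵀ * (M⁻¹ᵀ * M⁻¹) * M = (Mᵀ * M⁻¹ᵀ) * (M⁻¹ * M) := by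
          simp only [mul_assoc]
    _ = 1 := by rw [hMM, ← Matrix.transpose_mul, hMM, Matrix.transpose_one, mul_one]
  have h2 : Mᵀ * (Cᵀ * (P * C)) * M = (C * M)ᵀ * P * (C * M) := by
    rw [Matrix.transpose_mul]
    simp only [mul_assoc]
  have h3 : Mᵀ * (P - Cᵀ * (P * C)) * M = Mᵀ * P * M - (C * M)ᵀ * P * (C * M) := by
    rw [Matrix.mul_sub, Matrix.sub_mul, h2]
  have hfinal' : Mᵀ * P * M - (C * M)ᵀ * P * (C * M)
      = (2 : ℝ) • (1 : Matrix (Fin d) (Fin d) ℝ) := by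
    rw [← h3, hE, hMQ]
  rw [hCM, hM] at hfinal'
  have hexpand : (1 + A)ᵀ * P * (1 + A) - (1 - A)ᵀ * P * (1 - A)
      = (2 : ℝ) • (P * A + Aᵀ * P) := by
    simp only [Matrix.transpose_add, Matrix.transpose_sub, Matrix.transpose_one]
    rw [smul_add]
    rw [show ((2:ℝ) • (P * A) : Matrix (Fin d) (Fin d) ℝ) = P * A + P * A from two_smul ℝ _,
      show ((2:ℝ) • (Aᵀ * P) : Matrix (Fin d) (Fin d) ℝ) = Aᵀ * P + Aᵀ * P from two_smul ℝ _]
    noncomm_ring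
  rw [hexpand] at hfinal'
  have hPA : P * A + Aᵀ * P = 1 :=
    smul_right_injective (Matrix (Fin d) (Fin d) ℝ) (two_ne_zero) hfinal'
  exact ⟨P, hPsymm, hPposdef, hPA⟩

end LyapunovAux

/-- spectral fact behind the quadratic Lyapunov function for forgetful
PIN models. If `S` is an irreducible row-stochastic matrix with invariant probability
vector `π`, then every complex eigenvalue of `A = (I − Sᵀ) + π𝟙ᵀ` has positive real part,
and consequently the Lyapunov equation `ΠA + AᵀΠ = I` has a symmetric positive definite
solution. -/
theorem lyapunov_eq_solvable_of_irreducible_stochastic (d : ℕ) (hd : 1 ≤ d)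
    (S : Matrix (Fin d) (Fin d) ℝ)
    (hS0 : ∀ i j, 0 ≤ S i j) (hSrow : ∀ i, ∑ j, S i j = 1)
    (hirr : ∀ i j : Fin d, ∃ k : ℕ, 1 ≤ k ∧ 0 < (S ^ k) i j)
    (π : Fin d → ℝ) (hπ0 : ∀ i, 0 ≤ π i) (hπ1 : ∑ i, π i = 1)
    (hπinv : Sᵀ *ᵥ π = π)
    (A : Matrix (Fin d) (Fin d) ℝ)
    (hA : A = (1 - Sᵀ) + Matrix.of fun i _ => π i) :
    (∀ lam : ℂ, lam ∈ spectrum ℂ (A.map Complex.ofReal) → 0 < lam.re) ∧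
    ∃ Pmat : Matrix (Fin d) (Fin d) ℝ, Pmat.IsSymm ∧ Pmat.PosDef ∧ Pmat * A + Aᵀ * Pmat = 1 := by
  have hspec : ∀ lam : ℂ, lam ∈ spectrum ℂ (A.map Complex.ofReal) → 0 < lam.re :=
    spec_pos d hd S hS0 hSrow hirr π hπ0 hπ1 A hA
      (fun w hw hs => real_fixed_sum_zero hS0 hSrow hirr hw hs)
      (fun N μ => mem_spectrum_iff_eigen' N μ)
  exact ⟨hspec, lyap_of_stable d hd A hspec⟩
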